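/- Let n ≥ 1 be an integer and μ > 0 real. For every (z,w) ∈ ℂ^{n+1}, the Hermitian matrix H(z,w) defined in the context is positive definite. -/

import Mathlib

/-- `∏ j, (1 + |z j|²)^μ`. -/
noncomputable def prodPStar (n : ℕ) (μ : ℝ) (z : Fin n → ℂ) : ℝ :=
  ∏ j, (1 + ‖z j‖ ^ 2) ^ μ

/-- The complex Hessian `H` of the dual potential
`φ*_{n,μ}(z,w) = log(∏ j (1+|z_j|²)^μ + |w|²)`, as an `(n+1)×(n+1)` matrix indexed
by `Fin n ⊕ Unit` (the `Unit` index corresponding to the `w` variable). -/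
noncomputable def Hmat (n : ℕ) (μ : ℝ) (z : Fin n → ℂ) (w : ℂ) :
    Matrix (Fin n ⊕ Unit) (Fin n ⊕ Unit) ℂ :=
  fun i j =>
    match i, j with
    | Sum.inl a, Sum.inl b =>
        (μ * prodPStar n μ z : ℝ) *
            ((prodPStar n μ z + ‖w‖ ^ 2 : ℝ) * (if a = b then 1 else 0) +
              (μ * ‖w‖ ^ 2 : ℝ) * (starRingEnd ℂ) (z a) * z b) /
          ((1 + ‖z a‖ ^ 2 : ℝ) * (1 + ‖z b‖ ^ 2 : ℝ) *
            ((prodPStar n μ z + ‖w‖ ^ 2 : ℝ)) ^ 2)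
    | Sum.inl a, Sum.inr _ =>
        -((μ : ℂ) * w * (starRingEnd ℂ) (z a) * (prodPStar n μ z : ℝ)) /
          ((1 + ‖z a‖ ^ 2 : ℝ) *
            ((prodPStar n μ z + ‖w‖ ^ 2 : ℝ)) ^ 2)
    | Sum.inr _, Sum.inl b =>
        -((μ : ℂ) * (starRingEnd ℂ) w * z b * (prodPStar n μ z : ℝ)) /
          ((1 + ‖z b‖ ^ 2 : ℝ) *
            ((prodPStar n μ z + ‖w‖ ^ 2 : ℝ)) ^ 2)
    | Sum.inr _, Sum.inr _ =>
        (prodPStar n μ z : ℝ) / ((prodPStar n μ z + ‖w‖ ^ 2 : ℝ)) ^ 2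

private lemma habs_aux (u : ℂ) : (starRingEnd ℂ) u * u = ((‖u‖ ^ 2 : ℝ) : ℂ) := by
  rw [Complex.conj_mul']; push_cast; ring

open scoped ComplexOrder in
/-- A matrix of the form `diag(d) + c · (conj l) lᵀ` with the stated quadratic-form
positivity is positive definite. -/
private lemma auxPosDef {ι : Type*} [Fintype ι] [DecidableEq ι]
    (d : ι → ℝ) (c : ℝ) (l : ι → ℂ) (M : Matrix ι ι ℂ)
    (hM : ∀ i j, M i j
      = (d i : ℂ) * (if i = j then 1 else 0) + (c : ℂ) * (starRingEnd ℂ) (l i) * l j)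
    (hpos : ∀ x : ι → ℂ, x ≠ 0 →
      0 < ∑ i, d i * ‖x i‖ ^ 2 + c * ‖∑ i, l i * x i‖ ^ 2) :
    M.PosDef := by
  rw [Matrix.posDef_iff_dotProduct_mulVec]
  constructor
  · rw [Matrix.IsHermitian]
    ext i j
    rw [Matrix.conjTranspose_apply, hM i j, hM j i, Complex.star_def]
    by_cases hij : i = j
    · subst hij
      simp only [map_add, map_mul, Complex.conj_conj, Complex.conj_ofReal, if_true,
        eq_self_iff_true, map_one]
      ring
    · simp only [if_neg hij, if_neg (Ne.symm hij), map_add, map_mul, map_zero, mul_zero,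
        zero_add, Complex.conj_conj, Complex.conj_ofReal]
      ring
  · intro x hx
    have hrow : ∀ i, M.mulVec x i
        = (d i : ℂ) * x i + (c : ℂ) * (starRingEnd ℂ) (l i) * (∑ j, l j * x j) := by
      intro i
      simp only [Matrix.mulVec, dotProduct]
      calc ∑ j, M i j * x j
          = ∑ j, ((if i = j then (d i : ℂ) * x j else 0)
              + (c : ℂ) * (starRingEnd ℂ) (l i) * (l j * x j)) := by
            refine Finset.sum_congr rfl fun j _ => ?_
            rw [hM]
            by_cases hij : i = j <;> simp [hij] <;> ring
        _ = _ := by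
            rw [Finset.sum_add_distrib, ← Finset.mul_sum, Finset.sum_ite_eq]
            simp
    have hsum : dotProduct (star x) (M.mulVec x)
        = ((∑ i, d i * ‖x i‖ ^ 2
            + c * ‖∑ i, l i * x i‖ ^ 2 : ℝ) : ℂ) := by
      calc dotProduct (star x) (M.mulVec x)
          = ∑ i, (starRingEnd ℂ) (x i) *
              ((d i : ℂ) * x i + (c : ℂ) * (starRingEnd ℂ) (l i) * (∑ j, l j * x j)) := by
            simp [dotProduct, hrow, Complex.star_def]
        _ = (∑ i, ((d i : ℂ) * ((starRingEnd ℂ) (x i) * x i)))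
              + ∑ i, (c : ℂ) * ((starRingEnd ℂ) (l i * x i) * (∑ j, l j * x j)) := by
            rw [← Finset.sum_add_distrib]
            exact Finset.sum_congr rfl fun i _ => by rw [map_mul]; ring
        _ = ∑ i, ((d i : ℂ) * ((starRingEnd ℂ) (x i) * x i))
              + (c : ℂ) * ((∑ i, (starRingEnd ℂ) (l i * x i)) * (∑ j, l j * x j)) := by
            rw [← Finset.mul_sum, ← Finset.sum_mul]
        _ = _ := by
            rw [← map_sum, habs_aux]
            push_cast
            congr 1
            exact Finset.sum_congr rfl fun i _ => by rw [habs_aux (x i)]; push_cast; ring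
    rw [hsum, Complex.zero_lt_real]
    exact hpos x hx

open scoped ComplexOrder in
theorem stmt_9 (n : ℕ) (hn : 1 ≤ n) (μ : ℝ) (hμ : 0 < μ)
    (z : Fin n → ℂ) (w : ℂ) :
    (Hmat n μ z w).PosDef := by
  classical
  have hP0 : 0 < prodPStar n μ z :=
    Finset.prod_pos fun j _ => Real.rpow_pos_of_pos (by positivity) μ
  have hD0 : 0 < prodPStar n μ z + ‖w‖ ^ 2 := by positivity
  have hza : ∀ a : Fin n, (0:ℝ) < 1 + ‖z a‖ ^ 2 := fun a => by positivity
  have hDne : ((prodPStar n μ z + ‖w‖ ^ 2 : ℝ) : ℂ) ≠ 0 := by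
    exact_mod_cast hD0.ne'
  have hzane : ∀ a : Fin n, ((1 + ‖z a‖ ^ 2 : ℝ) : ℂ) ≠ 0 := fun a => by
    exact_mod_cast (hza a).ne'
  have hW2 : ((‖w‖ : ℝ) : ℂ) ^ 2 = (starRingEnd ℂ) w * w := by
    rw [habs_aux w]; push_cast; ring
  have hDne2 : ((prodPStar n μ z : ℝ) : ℂ) + (starRingEnd ℂ) w * w ≠ 0 := by
    rw [habs_aux w, ← Complex.ofReal_add]
    exact_mod_cast hD0.ne'
  refine auxPosDef
    (Sum.elim (fun j => μ * prodPStar n μ z /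
        ((prodPStar n μ z + ‖w‖ ^ 2) * (1 + ‖z j‖ ^ 2) ^ 2))
      (fun _ => 0))
    (prodPStar n μ z / (prodPStar n μ z + ‖w‖ ^ 2) ^ 2)
    (Sum.elim (fun j => -((μ:ℂ) * (starRingEnd ℂ) w * z j) /
        ((1 + ‖z j‖ ^ 2 : ℝ) : ℂ)) (fun _ => 1))
    _ ?_ ?_
  · rintro (a | ⟨⟩) (b | ⟨⟩)
    · show (μ * prodPStar n μ z : ℝ) *
          ((prodPStar n μ z + ‖w‖ ^ 2 : ℝ) * (if a = b then 1 else 0) +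
            (μ * ‖w‖ ^ 2 : ℝ) * (starRingEnd ℂ) (z a) * z b) /
          ((1 + ‖z a‖ ^ 2 : ℝ) * (1 + ‖z b‖ ^ 2 : ℝ) *
            ((prodPStar n μ z + ‖w‖ ^ 2 : ℝ)) ^ 2) = _
      by_cases hab : a = b
      · subst hab
        simp only [Sum.elim_inl, Sum.inl.injEq, if_pos rfl, map_div₀, map_neg, map_mul,
          Complex.conj_conj, Complex.conj_ofReal]
        push_cast
        rw [hW2]
        field_simp [hDne2]
      · simp only [Sum.elim_inl, Sum.inl.injEq, if_neg hab, map_div₀, map_neg, map_mul,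
          Complex.conj_conj, Complex.conj_ofReal, mul_zero, zero_add]
        push_cast
        rw [hW2]
        field_simp [hDne2]
    · show -((μ : ℂ) * w * (starRingEnd ℂ) (z a) * (prodPStar n μ z : ℝ)) /
          ((1 + ‖z a‖ ^ 2 : ℝ) *
            ((prodPStar n μ z + ‖w‖ ^ 2 : ℝ)) ^ 2) = _
      simp only [Sum.elim_inl, Sum.elim_inr, reduceCtorEq, if_false, map_div₀,
        map_neg, map_mul, map_one, mul_one, Complex.conj_conj, Complex.conj_ofReal]
      push_cast
      field_simp [hDne2]
      ring
    · show -((μ : ℂ) * (starRingEnd ℂ) w * z b * (prodPStar n μ z : ℝ)) /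
          ((1 + ‖z b‖ ^ 2 : ℝ) *
            ((prodPStar n μ z + ‖w‖ ^ 2 : ℝ)) ^ 2) = _
      simp only [Sum.elim_inl, Sum.elim_inr, reduceCtorEq, if_false, map_one, mul_zero]
      push_cast
      field_simp [hDne2]
      ring
    · show ((prodPStar n μ z : ℝ) : ℂ) /
          ((prodPStar n μ z + ‖w‖ ^ 2 : ℝ) : ℂ) ^ 2 = _
      simp only [Sum.elim_inr, if_pos rfl, map_one, mul_one]
      push_cast
      ring
  · intro x hx
    have hterm : ∀ i : Fin n ⊕ Unit, 0 ≤ (Sum.elim (fun j => μ * prodPStar n μ z /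
        ((prodPStar n μ z + ‖w‖ ^ 2) * (1 + ‖z j‖ ^ 2) ^ 2))
      (fun _ => 0) : Fin n ⊕ Unit → ℝ) i * ‖x i‖ ^ 2 := by
      rintro (a | ⟨⟩)
      · simp only [Sum.elim_inl]
        positivity
      · simp
    by_cases hz0 : ∃ a, x (Sum.inl a) ≠ 0
    · obtain ⟨a, ha⟩ := hz0
      have h1 : 0 < ∑ i, (Sum.elim (fun j => μ * prodPStar n μ z /
          ((prodPStar n μ z + ‖w‖ ^ 2) * (1 + ‖z j‖ ^ 2) ^ 2))
          (fun _ => 0) : Fin n ⊕ Unit → ℝ) i * ‖x i‖ ^ 2 := by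
        refine Finset.sum_pos' (fun i _ => hterm i) ⟨Sum.inl a, Finset.mem_univ _, ?_⟩
        have hxa : 0 < ‖x (Sum.inl a)‖ := norm_pos_iff.mpr ha
        simp only [Sum.elim_inl]
        positivity
      have h2 : 0 ≤ prodPStar n μ z / (prodPStar n μ z + ‖w‖ ^ 2) ^ 2 *
          ‖∑ i, (Sum.elim (fun j => -((μ:ℂ) * (starRingEnd ℂ) w * z j) /
            ((1 + ‖z j‖ ^ 2 : ℝ) : ℂ)) (fun _ => 1) : Fin n ⊕ Unit → ℂ) i * x i‖ ^ 2 := by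
        positivity
      linarith
    · push_neg at hz0
      have hu : x (Sum.inr ()) ≠ 0 := by
        intro h0
        apply hx
        funext i
        rcases i with a | ⟨⟩
        · exact hz0 a
        · exact h0
      have hS : (∑ i, (Sum.elim (fun j => -((μ:ℂ) * (starRingEnd ℂ) w * z j) /
            ((1 + ‖z j‖ ^ 2 : ℝ) : ℂ)) (fun _ => 1) : Fin n ⊕ Unit → ℂ) i * x i)
          = x (Sum.inr ()) := by
        rw [Fintype.sum_sum_type]
        simp [hz0]
      have h2 : 0 < prodPStar n μ z / (prodPStar n μ z + ‖w‖ ^ 2) ^ 2 *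
          ‖∑ i, (Sum.elim (fun j => -((μ:ℂ) * (starRingEnd ℂ) w * z j) /
            ((1 + ‖z j‖ ^ 2 : ℝ) : ℂ)) (fun _ => 1) : Fin n ⊕ Unit → ℂ) i * x i‖ ^ 2 := by
        rw [hS]
        have hxu : 0 < ‖x (Sum.inr ())‖ := norm_pos_iff.mpr hu
        positivity
      have h1 : 0 ≤ ∑ i, (Sum.elim (fun j => μ * prodPStar n μ z /
          ((prodPStar n μ z + ‖w‖ ^ 2) * (1 + ‖z j‖ ^ 2) ^ 2))
          (fun _ => 0) : Fin n ⊕ Unit → ℝ) i * ‖x i‖ ^ 2 :=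
        Finset.sum_nonneg fun i _ => hterm i
      linarith
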